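/- Let Ω be a topological space and let h : Ω → ℝ be a bounded upper semicontinuous function with h ≥ 0. Then the infimum of sup_{ω ∈ Δ} h(ω) taken over all open dense subsets Δ ⊆ Ω equals the infimum of sup_{ω ∈ Ξ} h(ω) taken over all dense subsets Ξ ⊆ Ω. -/

import Mathlib

/-- Remark after Lemma 3.1: for a bounded nonnegative upper semicontinuous function `h`,
the infimum of `sup_{ω ∈ Δ} h ω` over all open dense subsets `Δ` equals the infimum of
`sup_{ω ∈ Ξ} h ω` over all dense subsets `Ξ`. -/
theorem stmt_1 {Ω : Type*} [TopologicalSpace Ω] (h : Ω → ℝ)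
    (hbd : ∃ C, ∀ ω, h ω ≤ C) (husc : UpperSemicontinuous h) (hpos : ∀ ω, 0 ≤ h ω) :
    sInf ((fun Δ : Set Ω => sSup (h '' Δ)) '' {Δ : Set Ω | IsOpen Δ ∧ Dense Δ}) =
      sInf ((fun Ξ : Set Ω => sSup (h '' Ξ)) '' {Ξ : Set Ω | Dense Ξ}) := by
  obtain ⟨C, hC⟩ := hbd
  have hbdd : ∀ S : Set Ω, BddAbove (h '' S) := fun S =>
    ⟨C, fun x ⟨ω, _, hω⟩ => hω ▸ hC ω⟩
  have hnn : ∀ b ∈ (fun Ξ : Set Ω => sSup (h '' Ξ)) '' {Ξ : Set Ω | Dense Ξ}, (0 : ℝ) ≤ b := by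
    rintro b ⟨Ξ, _, rfl⟩
    exact Real.sSup_nonneg (by rintro x ⟨ω, _, rfl⟩; exact hpos ω)
  have hbelow : BddBelow ((fun Ξ : Set Ω => sSup (h '' Ξ)) '' {Ξ : Set Ω | Dense Ξ}) :=
    ⟨0, hnn⟩
  have hsub : (fun Δ : Set Ω => sSup (h '' Δ)) '' {Δ : Set Ω | IsOpen Δ ∧ Dense Δ} ⊆
      (fun Ξ : Set Ω => sSup (h '' Ξ)) '' {Ξ : Set Ω | Dense Ξ} :=
    Set.image_mono (fun Δ hΔ => hΔ.2)
  have hne : ((fun Δ : Set Ω => sSup (h '' Δ)) '' {Δ : Set Ω | IsOpen Δ ∧ Dense Δ}).Nonempty :=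
    ⟨_, Set.mem_image_of_mem _ ⟨isOpen_univ, dense_univ⟩⟩
  refine le_antisymm ?_ (csInf_le_csInf hbelow hne hsub)
  refine le_csInf (Set.Nonempty.mono hsub hne) ?_
  rintro b ⟨Ξ, hΞ, rfl⟩
  set s := sSup (h '' Ξ) with hs
  have hs0 : (0 : ℝ) ≤ s := hnn _ ⟨Ξ, hΞ, rfl⟩
  refine le_of_forall_pos_le_add ?_
  intro ε hε
  set Δ := h ⁻¹' Set.Iio (s + ε) with hΔdef
  have hopen : IsOpen Δ := husc.isOpen_preimage _
  have hΞΔ : Ξ ⊆ Δ := fun x hx =>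
    lt_of_le_of_lt (le_csSup (hbdd Ξ) ⟨x, hx, rfl⟩) (lt_add_of_pos_right s hε)
  have hdense : Dense Δ := hΞ.mono hΞΔ
  calc sInf ((fun Δ : Set Ω => sSup (h '' Δ)) '' {Δ : Set Ω | IsOpen Δ ∧ Dense Δ})
      ≤ sSup (h '' Δ) :=
        csInf_le ⟨0, fun b hb => hnn b (hsub hb)⟩ ⟨Δ, ⟨hopen, hdense⟩, rfl⟩
    _ ≤ s + ε := Real.sSup_le (by rintro x ⟨ω, hω, rfl⟩; exact le_of_lt hω)
        (by positivity)
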